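/- For a fully injective similarity scheme, given n, m ≥ 0, x_n ∈ X_n, x_m' ∈ X_m, either φ_{m+n,n}(x_n) = φ_{n+m,m}(x_m') and Γ_n(x_n) = Γ_m(x_m'), or Γ_n(x_n) ∩ Γ_m(x_m') = ∅. -/
import Mathlib


set_option linter.unusedSectionVars false
set_option linter.unusedVariables false

variable {Y : Type}

/-- Iterated embedding φ_{n,m} : X m → X n for m ≤ n. -/
def phiTo (X : ℕ → Type) (φs : ∀ n, X n → X (n + 1)) {m n : ℕ} (h : m ≤ n) (x : X m) : X n :=
  Nat.leRecOn h (fun {k} x => φs k x) x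

/-- Iterated projection π_{m,q} : Yᵐ × X q → X (q+m), the head of the word acting outermost. -/
def piFin (X : ℕ → Type) (πo : ∀ n, Y → X n → X (n + 1)) :
    ∀ (m q : ℕ), (Fin m → Y) → X q → X (q + m)
  | 0, _, _, x => x
  | m + 1, q, y, x => πo (q + m) (y 0) (piFin X πo m q (fun i => y i.succ) x)

/-- Iterated projection π_{m,0} : Yᵐ × X 0 → X m. -/
def piFin0 (X : ℕ → Type) (πo : ∀ n, Y → X n → X (n + 1)) :
    ∀ (m : ℕ), (Fin m → Y) → X 0 → X m
  | 0, _, x => x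
  | m + 1, y, x => πo m (y 0) (piFin0 X πo m (fun i => y i.succ) x)

/-- The set Γ_n(x_n) ⊂ Y^ℕ : all infinite addresses y such that for every p ≥ n the point
φ_{p,n}(x_n) lies in the cell C(y₁,…,y_p) = π_{p,0}({(y₁,…,y_p)} × X 0). -/
def Gamma (X : ℕ → Type) (φs : ∀ n, X n → X (n + 1)) (πo : ∀ n, Y → X n → X (n + 1))
    (n : ℕ) (xn : X n) : Set (ℕ → Y) :=
  { y | ∀ p, ∀ h : n ≤ p, ∃ x0 : X 0, phiTo X φs h xn = piFin0 X πo p (fun i : Fin p => y i.1) x0 }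

/-- The relation R on Y^ℕ: related iff equal or both in some Γ_n(x_n). -/
def simRel (X : ℕ → Type) (φs : ∀ n, X n → X (n + 1)) (πo : ∀ n, Y → X n → X (n + 1)) :
    (ℕ → Y) → (ℕ → Y) → Prop :=
  fun a b => a = b ∨ ∃ n, ∃ xn : X n, a ∈ Gamma X φs πo n xn ∧ b ∈ Gamma X φs πo n xn

variable {X : ℕ → Type}
  [TopologicalSpace Y] [CompactSpace Y] [T2Space Y]
  [∀ n, TopologicalSpace (X n)] [∀ n, CompactSpace (X n)] [∀ n, T2Space (X n)]


section AuxLemmas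

lemma phiTo_self (φs : ∀ n, X n → X (n + 1)) {n : ℕ} (h : n ≤ n) (x : X n) :
    phiTo X φs h x = x := Nat.leRecOn_self x

lemma phiTo_succ (φs : ∀ n, X n → X (n + 1)) {m p : ℕ} (h : m ≤ p) (h' : m ≤ p + 1) (x : X m) :
    phiTo X φs h' x = φs p (phiTo X φs h x) := Nat.leRecOn_succ h x

lemma phiTo_trans (φs : ∀ n, X n → X (n + 1)) {m n p : ℕ} (h1 : m ≤ n) (h2 : n ≤ p)
    (h3 : m ≤ p) (x : X m) :
    phiTo X φs h2 (phiTo X φs h1 x) = phiTo X φs h3 x := (Nat.leRecOn_trans h1 h2 x).symm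

lemma phiTo_step (φs : ∀ n, X n → X (n + 1)) {k p : ℕ} (h : k + 1 ≤ p) (h' : k ≤ p) (w : X k) :
    phiTo X φs h (φs k w) = phiTo X φs h' w := by
  have h1 : phiTo X φs (Nat.le_succ k) w = φs k w := by
    rw [phiTo_succ φs le_rfl, phiTo_self]
  rw [← h1, phiTo_trans φs (Nat.le_succ k) h h']

lemma comm_iter (φs : ∀ n, X n → X (n + 1)) (πo : ∀ n, Y → X n → X (n + 1))
    (hcomm : ∀ (n : ℕ) (y : Y) (x : X n), πo (n + 1) y (φs n x) = φs (n + 1) (πo n y x)) :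
    ∀ (k : ℕ) (y : Y) (x0 : X 0),
      πo k y (phiTo X φs (Nat.zero_le k) x0)
        = phiTo X φs (Nat.succ_le_succ (Nat.zero_le k)) (πo 0 y x0) := by
  intro k
  induction k with
  | zero => intro y x0; rw [phiTo_self, phiTo_self]
  | succ k ih =>
    intro y x0
    rw [phiTo_succ φs (Nat.zero_le k), hcomm, ih,
      phiTo_succ φs (Nat.succ_le_succ (Nat.zero_le k))]

lemma key_lemma (φs : ∀ n, X n → X (n + 1)) (πo : ∀ n, Y → X n → X (n + 1))
    (hφi : ∀ n, Function.Injective (φs n))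
    (hπs : ∀ n, Function.Surjective fun p : Y × X n => πo n p.1 p.2)
    (hcomm : ∀ (n : ℕ) (y : Y) (x : X n), πo (n + 1) y (φs n x) = φs (n + 1) (πo n y x))
    (hquot : ∀ (n : ℕ) (y y' : Y) (ξ ξ' : X n), πo n y ξ = πo n y' ξ' → (y, ξ) ≠ (y', ξ') →
      ∃ x0 x0' : X 0, ξ = phiTo X φs (Nat.zero_le n) x0 ∧ ξ' = phiTo X φs (Nat.zero_le n) x0' ∧
        πo 0 y x0 = πo 0 y' x0') (p : ℕ) :
    ∀ (w : X p) (z : ℕ → Y) (x0 : X 0),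
      φs p w = piFin0 X πo (p + 1) (fun i : Fin (p + 1) => z i.1) x0 →
      ∃ x0' : X 0, w = piFin0 X πo p (fun i : Fin p => z i.1) x0' := by
  induction p with
  | zero => intro w z x0 _; exact ⟨w, rfl⟩
  | succ p ih =>
    intro w z x0 h
    obtain ⟨⟨y', ξ'⟩, hw⟩ := hπs p w
    simp only at hw
    have hunf : piFin0 X πo (p + 1 + 1) (fun i : Fin (p + 1 + 1) => z i.1) x0
        = πo (p + 1) (z 0) (piFin0 X πo (p + 1) (fun i : Fin (p + 1) => z (i.1 + 1)) x0) := by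
      simp only [piFin0, Fin.val_zero, Fin.val_succ]
    set u := piFin0 X πo (p + 1) (fun i : Fin (p + 1) => z (i.1 + 1)) x0 with hu
    have heq : πo (p + 1) (z 0) u = πo (p + 1) y' (φs p ξ') := by
      rw [← hunf, ← h, hcomm p y' ξ', hw]
    by_cases hc : ((z 0, u) : Y × X (p + 1)) = (y', φs p ξ')
    · simp only [Prod.mk.injEq] at hc
      obtain ⟨h1, h2⟩ := hc
      obtain ⟨x0'', hx0''⟩ := ih ξ' (fun k => z (k + 1)) x0 h2.symm
      refine ⟨x0'', ?_⟩
      simp only [piFin0, Fin.val_zero, Fin.val_succ]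
      rw [← hw, ← h1, hx0'']
    · obtain ⟨x0a, x0b, hua, hxb, hpi⟩ := hquot (p + 1) (z 0) y' u (φs p ξ') heq hc
      have hxb' : ξ' = phiTo X φs (Nat.zero_le p) x0b := by
        apply hφi p
        rw [← phiTo_succ φs (Nat.zero_le p) (Nat.zero_le (p + 1))]
        exact hxb
      have hwa : w = πo p (z 0) (phiTo X φs (Nat.zero_le p) x0a) := by
        rw [← hw, hxb', comm_iter φs πo hcomm, comm_iter φs πo hcomm, hpi]
      have hfu : φs p (phiTo X φs (Nat.zero_le p) x0a)
          = piFin0 X πo (p + 1) (fun i : Fin (p + 1) => z (i.1 + 1)) x0 := by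
        rw [← phiTo_succ φs (Nat.zero_le p) (Nat.zero_le (p + 1)), ← hua, hu]
      obtain ⟨x0'', hx0''⟩ := ih (phiTo X φs (Nat.zero_le p) x0a) (fun k => z (k + 1)) x0 hfu
      refine ⟨x0'', ?_⟩
      simp only [piFin0, Fin.val_zero, Fin.val_succ]
      rw [hwa, hx0'']

lemma Gamma_step (φs : ∀ n, X n → X (n + 1)) (πo : ∀ n, Y → X n → X (n + 1))
    (hφi : ∀ n, Function.Injective (φs n))
    (hπs : ∀ n, Function.Surjective fun p : Y × X n => πo n p.1 p.2)
    (hcomm : ∀ (n : ℕ) (y : Y) (x : X n), πo (n + 1) y (φs n x) = φs (n + 1) (πo n y x))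
    (hquot : ∀ (n : ℕ) (y y' : Y) (ξ ξ' : X n), πo n y ξ = πo n y' ξ' → (y, ξ) ≠ (y', ξ') →
      ∃ x0 x0' : X 0, ξ = phiTo X φs (Nat.zero_le n) x0 ∧ ξ' = phiTo X φs (Nat.zero_le n) x0' ∧
        πo 0 y x0 = πo 0 y' x0')
    (k : ℕ) (w : X k) :
    Gamma X φs πo (k + 1) (φs k w) = Gamma X φs πo k w := by
  ext z
  constructor
  · intro hz p hp
    rcases eq_or_lt_of_le hp with rfl | hlt
    · obtain ⟨x0, hx0⟩ := hz (k + 1) le_rfl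
      rw [phiTo_self] at hx0
      obtain ⟨x0', hx0'⟩ := key_lemma φs πo hφi hπs hcomm hquot k w z x0 hx0
      exact ⟨x0', by rw [phiTo_self]; exact hx0'⟩
    · obtain ⟨x0, hx0⟩ := hz p hlt
      refine ⟨x0, ?_⟩
      rw [← phiTo_step φs hlt hp w]
      exact hx0
  · intro hz p hp
    obtain ⟨x0, hx0⟩ := hz p (Nat.le_of_succ_le hp)
    refine ⟨x0, ?_⟩
    rw [phiTo_step φs hp (Nat.le_of_succ_le hp) w]
    exact hx0

lemma Gamma_phiTo (φs : ∀ n, X n → X (n + 1)) (πo : ∀ n, Y → X n → X (n + 1))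
    (hφi : ∀ n, Function.Injective (φs n))
    (hπs : ∀ n, Function.Surjective fun p : Y × X n => πo n p.1 p.2)
    (hcomm : ∀ (n : ℕ) (y : Y) (x : X n), πo (n + 1) y (φs n x) = φs (n + 1) (πo n y x))
    (hquot : ∀ (n : ℕ) (y y' : Y) (ξ ξ' : X n), πo n y ξ = πo n y' ξ' → (y, ξ) ≠ (y', ξ') →
      ∃ x0 x0' : X 0, ξ = phiTo X φs (Nat.zero_le n) x0 ∧ ξ' = phiTo X φs (Nat.zero_le n) x0' ∧
        πo 0 y x0 = πo 0 y' x0')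
    {n p : ℕ} (h : n ≤ p) (xn : X n) :
    Gamma X φs πo p (phiTo X φs h xn) = Gamma X φs πo n xn := by
  induction p, h using Nat.le_induction with
  | base => rw [phiTo_self]
  | succ p hp ih =>
    rw [phiTo_succ φs hp, Gamma_step φs πo hφi hπs hcomm hquot, ih]

end AuxLemmas

theorem statement_14
    (φs : ∀ n, X n → X (n + 1)) (πo : ∀ n, Y → X n → X (n + 1))
    (hφc : ∀ n, Continuous (φs n)) (hφi : ∀ n, Function.Injective (φs n))
    (hπc : ∀ n, Continuous fun p : Y × X n => πo n p.1 p.2)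
    (hπs : ∀ n, Function.Surjective fun p : Y × X n => πo n p.1 p.2)
    (hcomm : ∀ (n : ℕ) (y : Y) (x : X n), πo (n + 1) y (φs n x) = φs (n + 1) (πo n y x))
    (hquot : ∀ (n : ℕ) (y y' : Y) (ξ ξ' : X n), πo n y ξ = πo n y' ξ' → (y, ξ) ≠ (y', ξ') →
      ∃ x0 x0' : X 0, ξ = phiTo X φs (Nat.zero_le n) x0 ∧ ξ' = phiTo X φs (Nat.zero_le n) x0' ∧
        πo 0 y x0 = πo 0 y' x0')
    (hfull : ∀ (p : ℕ) (xp xp' : X p) (y : ℕ → Y),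
      y ∈ Gamma X φs πo p xp → y ∈ Gamma X φs πo p xp' → xp = xp')
    (n m : ℕ) (xn : X n) (xm : X m) :
    (phiTo X φs (show n ≤ n + m by omega) xn = phiTo X φs (show m ≤ n + m by omega) xm ∧
      Gamma X φs πo n xn = Gamma X φs πo m xm) ∨
    Gamma X φs πo n xn ∩ Gamma X φs πo m xm = ∅ := by
  by_cases hdis : Gamma X φs πo n xn ∩ Gamma X φs πo m xm = ∅
  · exact Or.inr hdis
  · left
    obtain ⟨z, hz1, hz2⟩ := Set.nonempty_iff_ne_empty.mpr hdis
    have hn : n ≤ n + m := by omega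
    have hm : m ≤ n + m := by omega
    have hzq1 : z ∈ Gamma X φs πo (n + m) (phiTo X φs hn xn) := by
      rw [Gamma_phiTo φs πo hφi hπs hcomm hquot hn xn]; exact hz1
    have hzq2 : z ∈ Gamma X φs πo (n + m) (phiTo X φs hm xm) := by
      rw [Gamma_phiTo φs πo hφi hπs hcomm hquot hm xm]; exact hz2
    have E : phiTo X φs hn xn = phiTo X φs hm xm :=
      hfull (n + m) _ _ z hzq1 hzq2
    refine ⟨E, ?_⟩
    rw [← Gamma_phiTo φs πo hφi hπs hcomm hquot hn xn, E,
      Gamma_phiTo φs πo hφi hπs hcomm hquot hm xm]
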